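/- Let λ ≥ 0, and let (6) be the system over ℂ in unknowns a,b,c,e,f (with e ≠ 0): e = af−bc, e = |a|² + t·a·conj(c) + E|c|², λe = a·conj(b) + t·a·conj(f) + E·c·conj(f), 0 = conj(a)·b + t·b·conj(c) + E·conj(c)·f, 0 = |b|² + t·b·conj(f) + E|f|², where t ≥ 0 and E ∈ ℂ. If this system has a solution with e ≠ 0, then t = λ and E = 0. -/

import Mathlib

/-- Lemma 2.5(i): the triple `(1,λ,0)` is equivalent only to itself among
triples `(1,t,E)`; the system (6) (with `D = 0` in equation (V)) encodes the
existence of a Lie algebra automorphism intertwining the complex structures. -/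
theorem stmt12 (lam t : ℝ) (hlam : 0 ≤ lam) (ht : 0 ≤ t) (E : ℂ)
    (h : ∃ a b c e f : ℂ, e ≠ 0 ∧
      e = a * f - b * c ∧
      e = (Complex.normSq a : ℂ) + (t : ℂ) * a * (starRingEnd ℂ) c +
        E * (Complex.normSq c : ℂ) ∧
      (lam : ℂ) * e = a * (starRingEnd ℂ) b + (t : ℂ) * a * (starRingEnd ℂ) f +
        E * c * (starRingEnd ℂ) f ∧
      0 = (starRingEnd ℂ) a * b + (t : ℂ) * b * (starRingEnd ℂ) c +
        E * (starRingEnd ℂ) c * f ∧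
      0 = (Complex.normSq b : ℂ) + (t : ℂ) * b * (starRingEnd ℂ) f +
        E * (Complex.normSq f : ℂ)) :
    t = lam ∧ E = 0 := by
  obtain ⟨a, b, c, e, f, he, h1, h2, h3, h4, h5⟩ := h
  simp only [← Complex.mul_conj] at h2 h3 h5
  have h1c := congrArg (starRingEnd ℂ) h1
  simp only [map_sub, map_mul] at h1c
  -- b = 0
  have hb : b = 0 := by
    have hkey : b * (starRingEnd ℂ) e = 0 := by
      linear_combination b * h1c - (starRingEnd ℂ) f * h4 + (starRingEnd ℂ) c * h5
    have hce : (starRingEnd ℂ) e ≠ 0 := by simpa using he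
    exact (mul_eq_zero.mp hkey).resolve_right hce
  subst hb
  simp only [zero_mul, mul_zero, sub_zero, map_zero, add_zero, zero_add] at h1 h3 h5
  have ha : a ≠ 0 := fun h => he (by simp [h1, h])
  have hf : f ≠ 0 := fun h => he (by simp [h1, h])
  have hE : E = 0 := by
    have : E * (f * (starRingEnd ℂ) f) = 0 := by linear_combination -h5
    rcases mul_eq_zero.mp this with h | h
    · exact h
    · exact absurd (mul_eq_zero.mp h) (by simp [hf])
  refine ⟨?_, hE⟩
  subst hE
  simp only [map_zero, zero_mul, mul_zero, add_zero] at h3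
  rw [h1] at h3
  have hlf : (lam : ℂ) * f = (t : ℂ) * (starRingEnd ℂ) f := by
    have := mul_left_cancel₀ ha (by linear_combination h3 : a * ((lam : ℂ) * f) = a * ((t : ℂ) * (starRingEnd ℂ) f))
    exact this
  have habs := congrArg (‖·‖) hlf
  simp only [norm_mul, Complex.norm_real, Complex.norm_conj, Real.norm_eq_abs,
    abs_of_nonneg hlam, abs_of_nonneg ht] at habs
  have hfabs : ‖f‖ ≠ 0 := by simpa using hf
  exact (mul_right_cancel₀ hfabs habs).symm
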